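/- There exist symmetric matrices a_1^+, …, a_M^+ in M_k(F) (M = k(k+1)/2, transpose involution) and matrices b_1, …, b_{M-1} in M_k(F) such that Cap_M(a_1^+,…,a_M^+; b_1,…,b_{M-1}) = e_{1,k}. In particular (M_k(F), t) does not satisfy the *-Capelli polynomial Cap^*_M[Y,X]. -/

import Mathlib

open Matrix

/-- Product of a list in a (possibly non-unital) ring; the empty product is 0. -/
def ncProd {A : Type} [Mul A] [Zero A] : List A → A
  | [] => 0
  | a :: l => l.foldl (· * ·) a

/-- The m-th Capelli polynomial evaluated at alternating entries `t` and
interspersed entries `x`. -/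
def capelli {A : Type} [NonUnitalRing A] (m : ℕ) (t : Fin m → A)
    (x : Fin (m - 1) → A) : A :=
  ∑ σ : Equiv.Perm (Fin m), (Equiv.Perm.sign σ : ℤ) •
    ncProd (List.ofFn fun i : Fin m =>
      if h : (i : ℕ) < m - 1 then t (σ i) * x ⟨(i : ℕ), h⟩ else t (σ i))

lemma ncProd_concat {A : Type} [Mul A] [Zero A] (a : A) (l : List A) (x : A) :
    ncProd ((a :: l).concat x) = ncProd (a :: l) * x := by
  simp [ncProd, List.concat_eq_append, List.foldl_append]

lemma ncProd_ofFn_concat {A : Type} [Mul A] [Zero A] {n : ℕ} (f : Fin (n + 2) → A) :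
    ncProd (List.ofFn f) =
      ncProd (List.ofFn fun i : Fin (n+1) => f i.castSucc) * f (Fin.last (n+1)) := by
  rw [List.ofFn_succ' f]
  rw [show (List.ofFn fun i : Fin (n+1) => f i.castSucc) =
      f (0 : Fin (n+1)).castSucc :: (List.ofFn fun i : Fin n => f i.succ.castSucc) from by
    rw [List.ofFn_succ]]
  exact ncProd_concat _ _ _

lemma chain {F : Type} [Field F] {k : ℕ} : ∀ (n : ℕ) (g : Fin (n+1) → Matrix (Fin k) (Fin k) F)
    (p q : Fin (n+1) → Fin k),
    ncProd (List.ofFn fun i : Fin (n+1) => g i * single (p i) (q i) 1)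
    = Matrix.of fun u v => (g 0 u (p 0) * ∏ j : Fin n, g j.succ (q j.castSucc) (p j.succ)) *
        (if v = q (Fin.last n) then 1 else 0)
  | 0, g, p, q => by
    ext u v
    simp only [List.ofFn_succ, List.ofFn_zero, ncProd, List.foldl_nil, of_apply]
    by_cases h : v = q 0
    · subst h
      simp [Fin.last]
    · rw [Matrix.mul_single_apply_of_ne _ _ _ _ _ (show v ≠ q (0 : Fin 1) from h)]
      simp [h, Fin.last]
  | (n+1), g, p, q => by
    rw [ncProd_ofFn_concat, chain n (fun i => g i.castSucc) (fun i => p i.castSucc)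
      (fun i => q i.castSucc), ← mul_assoc]
    ext u v
    by_cases h : v = q (Fin.last (n+1))
    · subst h
      rw [of_apply, Matrix.mul_single_apply_same, if_pos rfl, Matrix.mul_apply]
      rw [Finset.sum_eq_single ((q (Fin.last n).castSucc))]
      · rw [of_apply, if_pos rfl, Fin.prod_univ_castSucc]
        simp only [Fin.succ_castSucc, Fin.succ_last, Fin.castSucc_zero, mul_one]
        ring
      · intro w _ hw
        rw [of_apply, if_neg hw, mul_zero, zero_mul]
      · simp
    · rw [of_apply, if_neg h, mul_zero,
        Matrix.mul_single_apply_of_ne _ _ _ _ _ h]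

lemma chain' {F : Type} [Field F] {k : ℕ} (n : ℕ) (g : Fin (n+2) → Matrix (Fin k) (Fin k) F)
    (p q : Fin (n+1) → Fin k) :
    ncProd (List.ofFn fun i : Fin (n+2) =>
        if h : (i : ℕ) < n+1 then g i * single (p ⟨(i:ℕ), h⟩) (q ⟨(i:ℕ), h⟩) 1 else g i)
    = Matrix.of fun u v => (g 0 u (p 0) *
        ∏ j : Fin n, g j.succ.castSucc (q j.castSucc) (p j.succ)) *
        g (Fin.last (n+1)) (q (Fin.last n)) v := by
  rw [ncProd_ofFn_concat]
  rw [dif_neg (show ¬ ((Fin.last (n+1) : ℕ) < n+1) by simp)]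
  have hl : (List.ofFn fun i : Fin (n+1) =>
      (fun i : Fin (n+2) => if h : (i : ℕ) < n+1 then
        g i * single (p ⟨(i:ℕ), h⟩) (q ⟨(i:ℕ), h⟩) 1 else g i) i.castSucc)
      = List.ofFn fun i : Fin (n+1) => g i.castSucc * single (p i) (q i) 1 := by
    congr 1
    funext i
    beta_reduce
    rw [dif_pos (show ((i.castSucc : ℕ)) < n+1 from i.isLt)]
    rfl
  rw [hl, chain n (fun i => g i.castSucc) p q]
  ext u v
  rw [Matrix.mul_apply, of_apply, Finset.sum_eq_single (q (Fin.last n))]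
  · rw [of_apply, if_pos rfl, mul_one, Fin.castSucc_zero]
  · intro w _ hw
    rw [of_apply, if_neg hw, mul_zero, zero_mul]
  · simp

lemma card_sym (k : ℕ) : Fintype.card {p : Fin k × Fin k // p.1 ≤ p.2} = k*(k+1)/2 := by
  have e : {p : Fin k × Fin k // p.1 ≤ p.2} ≃ Σ j : Fin k, Fin ((j : ℕ)+1) :=
    { toFun := fun p => ⟨p.1.2, ⟨p.1.1, by have := p.2; omega⟩⟩
      invFun := fun x => ⟨(⟨(x.2 : ℕ), by have := x.2.isLt; have := x.1.isLt; omega⟩, x.1), by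
        have := x.2.isLt; simp only [Fin.le_def]; omega⟩
      left_inv := fun p => by
        ext <;> simp
      right_inv := fun x => by
        ext <;> simp }
  rw [Fintype.card_congr e, Fintype.card_sigma]
  simp only [Fintype.card_fin]
  rw [Fin.sum_univ_eq_sum_range (fun j => j + 1) k]
  have h1 : ∑ i ∈ Finset.range (k+1), i = (∑ i ∈ Finset.range k, (i+1)) + 0 :=
    Finset.sum_range_succ' id k
  rw [Finset.sum_range_id, Nat.add_sub_cancel, mul_comm (k+1) k] at h1
  omega

lemma exists_c (k N : ℕ) (hk2 : 2 ≤ k) (hM : k*(k+1)/2 = N+2)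
    (hk0 : 0 < k) (hk1 : k - 1 < k) :
    ∃ c : Fin (N+2) → Fin k × Fin k,
      Function.Injective c ∧ (∀ j, (c j).1 ≤ (c j).2) ∧
      c 0 = (⟨0, hk0⟩, ⟨0, hk0⟩) ∧
      c (Fin.last (N+1)) = (⟨k-1, hk1⟩, ⟨k-1, hk1⟩) := by
  have hcard : Fintype.card {p : Fin k × Fin k // p.1 ≤ p.2} = N+2 := by
    rw [card_sym, hM]
  let e0 : {p : Fin k × Fin k // p.1 ≤ p.2} ≃ Fin (N+2) := Fintype.equivFinOfCardEq hcard
  let p0 : {p : Fin k × Fin k // p.1 ≤ p.2} := ⟨(⟨0, hk0⟩, ⟨0, hk0⟩), le_refl _⟩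
  let p1 : {p : Fin k × Fin k // p.1 ≤ p.2} := ⟨(⟨k-1, hk1⟩, ⟨k-1, hk1⟩), le_refl _⟩
  have hp01 : p0 ≠ p1 := by
    intro h
    have := congrArg (fun x => (x.1.1 : ℕ)) h
    simp [p0, p1] at this
    omega
  have h01 : e0 p0 ≠ e0 p1 := fun h => hp01 (e0.injective h)
  set j : Fin (N+2) := Equiv.swap (0 : Fin (N+2)) (e0 p0) (e0 p1) with hj
  have hj0 : j ≠ 0 := by
    intro h
    apply h01
    have := congrArg (Equiv.swap (0 : Fin (N+2)) (e0 p0)) h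
    rw [hj, Equiv.swap_apply_self, Equiv.swap_apply_left] at this
    exact this.symm
  have hlast0 : (Fin.last (N+1) : Fin (N+2)) ≠ 0 := by
    intro h
    have := congrArg Fin.val h
    simp [Fin.last] at this
  let π : Equiv.Perm (Fin (N+2)) :=
    (Equiv.swap (Fin.last (N+1)) j).trans (Equiv.swap (0 : Fin (N+2)) (e0 p0))
  refine ⟨fun x => (e0.symm (π x) : Fin k × Fin k), ?_, ?_, ?_, ?_⟩
  · intro x y h
    exact π.injective (e0.symm.injective (Subtype.ext h))
  · intro x
    exact (e0.symm (π x)).2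
  · show ((e0.symm (π 0) : {p : Fin k × Fin k // p.1 ≤ p.2}) : Fin k × Fin k) = _
    have : π 0 = e0 p0 := by
      show Equiv.swap (0 : Fin (N+2)) (e0 p0) (Equiv.swap (Fin.last (N+1)) j 0) = _
      rw [Equiv.swap_apply_of_ne_of_ne hlast0.symm (Ne.symm hj0), Equiv.swap_apply_left]
    rw [this, Equiv.symm_apply_apply]
  · show ((e0.symm (π (Fin.last (N+1))) : {p : Fin k × Fin k // p.1 ≤ p.2}) : Fin k × Fin k) = _
    have : π (Fin.last (N+1)) = e0 p1 := by
      show Equiv.swap (0 : Fin (N+2)) (e0 p0) (Equiv.swap (Fin.last (N+1)) j (Fin.last (N+1))) = _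
      rw [Equiv.swap_apply_left, hj, Equiv.swap_apply_self]
    rw [this, Equiv.symm_apply_apply]

lemma fin_tri {N : ℕ} (x : Fin (N+2)) :
    x = 0 ∨ x = Fin.last (N+1) ∨ ∃ j : Fin N, x = j.succ.castSucc := by
  by_cases h0 : (x : ℕ) = 0
  · left; ext; simpa using h0
  · by_cases hl : (x : ℕ) = N+1
    · right; left; ext; simpa [Fin.last] using hl
    · right; right
      have hx := x.isLt
      refine ⟨⟨(x : ℕ) - 1, by omega⟩, ?_⟩
      ext
      simp only [Fin.coe_castSucc, Fin.val_succ]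
      omega

def aMat (F : Type) [Field F] {k N : ℕ} (c : Fin (N+2) → Fin k × Fin k)
    (i : Fin (N+2)) : Matrix (Fin k) (Fin k) F :=
  Matrix.of fun u v => if (u ⊓ v, u ⊔ v) = c i then 1 else 0

def bMat (F : Type) [Field F] {k N : ℕ} (c : Fin (N+2) → Fin k × Fin k)
    (j : Fin (N+2-1)) : Matrix (Fin k) (Fin k) F :=
  single (c j.castSucc).2 (c j.succ).1 1

lemma aMat_apply (F : Type) [Field F] {k N : ℕ} (c : Fin (N+2) → Fin k × Fin k)
    (i : Fin (N+2)) (u v : Fin k) :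
    aMat F c i u v = if (u ⊓ v, u ⊔ v) = c i then (1:F) else 0 := rfl

lemma cap_term (F : Type) [Field F] {k N : ℕ} (c : Fin (N+2) → Fin k × Fin k)
    (σ : Equiv.Perm (Fin (N+2))) :
    ncProd (List.ofFn fun i : Fin (N+2) =>
        if h : (i : ℕ) < N+2-1 then aMat F c (σ i) * bMat F c ⟨(i:ℕ), h⟩ else aMat F c (σ i))
    = Matrix.of fun u v =>
        (aMat F c (σ 0) u (c 0).2 *
          ∏ j : Fin N, aMat F c (σ j.succ.castSucc) ((c j.succ.castSucc).1)
            ((c j.succ.castSucc).2)) *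
        aMat F c (σ (Fin.last (N+1))) ((c (Fin.last (N+1))).1) v := by
  have h := chain' N (fun i => aMat F c (σ i)) (fun i : Fin (N+1) => (c i.castSucc).2)
    (fun i : Fin (N+1) => (c i.succ).1)
  refine Eq.trans ?_ (h.trans ?_)
  · rfl
  · simp only [Fin.castSucc_zero, Fin.succ_last, Fin.succ_castSucc]

lemma aMat_at_c (F : Type) [Field F] {k N : ℕ} (c : Fin (N+2) → Fin k × Fin k)
    (hle : ∀ j, (c j).1 ≤ (c j).2) (hinj : Function.Injective c) (i m : Fin (N+2)) :
    aMat F c i ((c m).1) ((c m).2) = if m = i then (1:F) else 0 := by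
  rw [aMat_apply, inf_eq_left.mpr (hle m), sup_eq_right.mpr (hle m), Prod.mk.eta]
  by_cases h : c m = c i
  · rw [if_pos h, if_pos (hinj h)]
  · rw [if_neg h, if_neg (fun e => h (congrArg c e))]

set_option maxHeartbeats 1000000 in
theorem main2 (F : Type) [Field F] (k N : ℕ) (hk2 : 2 ≤ k) (hM : k*(k+1)/2 = N+2)
    (hk0 : 0 < k) (hk1 : k - 1 < k) :
    ∃ (a : Fin (N+2) → Matrix (Fin k) (Fin k) F)
      (b : Fin (N+2-1) → Matrix (Fin k) (Fin k) F),
      (∀ i, (a i)ᵀ = a i) ∧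
      capelli (N+2) a b =
        single (⟨0, hk0⟩ : Fin k) (⟨k-1, hk1⟩ : Fin k) (1:F) := by
  obtain ⟨c, hinj, hle, hc0, hcl⟩ := exists_c k N hk2 hM hk0 hk1
  have hc02 : (c 0).2 = (⟨0, hk0⟩ : Fin k) := by rw [hc0]
  have hcl1 : (c (Fin.last (N+1))).1 = (⟨k-1, hk1⟩ : Fin k) := by rw [hcl]
  have hzle : ∀ u : Fin k, (⟨0, hk0⟩ : Fin k) ≤ u := by
    intro u; simp [Fin.le_def]
  have htge : ∀ v : Fin k, v ≤ (⟨k-1, hk1⟩ : Fin k) := by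
    intro v; have := v.isLt; simp [Fin.le_def]; omega
  have hzt : ((⟨0, hk0⟩ : Fin k)) ≠ (⟨k-1, hk1⟩ : Fin k) := by
    intro h; have := congrArg Fin.val h; simp at this; omega
  -- value of first factor when σ 0 = last : zero
  have hAl0 : ∀ u : Fin k, aMat F c (Fin.last (N+1)) u (c 0).2 = 0 := by
    intro u
    rw [hc02, aMat_apply, hcl, inf_eq_right.mpr (hzle u),
      if_neg (fun h => hzt (congrArg Prod.fst h))]
  -- value of first factor when σ 0 = 0
  have hA00 : ∀ u : Fin k, aMat F c 0 u (c 0).2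
      = if u = (⟨0, hk0⟩ : Fin k) then (1:F) else 0 := by
    intro u
    rw [hc02, aMat_apply, hc0, inf_eq_right.mpr (hzle u), sup_eq_left.mpr (hzle u)]
    by_cases h : u = (⟨0, hk0⟩ : Fin k)
    · rw [if_pos h, if_pos (by rw [h])]
    · rw [if_neg h, if_neg (fun e => h (congrArg Prod.snd e))]
  -- value of last factor for σ = 1
  have hAll : ∀ v : Fin k, aMat F c (Fin.last (N+1)) ((c (Fin.last (N+1))).1) v
      = if v = (⟨k-1, hk1⟩ : Fin k) then (1:F) else 0 := by
    intro v
    rw [hcl1, aMat_apply, hcl, inf_eq_right.mpr (htge v), sup_eq_left.mpr (htge v)]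
    by_cases h : v = (⟨k-1, hk1⟩ : Fin k)
    · rw [if_pos h, if_pos (by rw [h])]
    · rw [if_neg h, if_neg (fun e => h (congrArg Prod.fst e))]
  refine ⟨aMat F c, bMat F c, ?_, ?_⟩
  · intro i
    ext u v
    rw [Matrix.transpose_apply, aMat_apply, aMat_apply, inf_comm, sup_comm]
  · have e1 : capelli (N+2) (aMat F c) (bMat F c)
        = ∑ σ : Equiv.Perm (Fin (N+2)), (Equiv.Perm.sign σ : ℤ) • Matrix.of (fun u v =>
          (aMat F c (σ 0) u (c 0).2 *
            ∏ j : Fin N, aMat F c (σ j.succ.castSucc) ((c j.succ.castSucc).1)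
              ((c j.succ.castSucc).2)) *
          aMat F c (σ (Fin.last (N+1))) ((c (Fin.last (N+1))).1) v) := by
      unfold capelli
      exact Finset.sum_congr rfl fun σ _ => by rw [cap_term F c σ]
    rw [e1, Finset.sum_eq_single (1 : Equiv.Perm (Fin (N+2)))]
    · -- the identity term
      have hprod1 : (∏ j : Fin N, aMat F c ((1 : Equiv.Perm (Fin (N+2))) j.succ.castSucc)
          ((c j.succ.castSucc).1) ((c j.succ.castSucc).2)) = 1 := by
        apply Finset.prod_eq_one
        intro j _
        simp only [Equiv.Perm.one_apply]
        rw [aMat_at_c F c hle hinj, if_pos rfl]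
      rw [Equiv.Perm.sign_one]
      ext u v
      rw [Units.val_one, one_smul, of_apply, hprod1, mul_one]
      simp only [Equiv.Perm.one_apply]
      rw [hA00 u, hAll v]
      by_cases hu : u = (⟨0, hk0⟩ : Fin k) <;>
        by_cases hv : v = (⟨k-1, hk1⟩ : Fin k) <;>
        simp [hu, hv, single, eq_comm]
    · intro σ _ hσ
      by_cases hmid : ∀ j : Fin N, σ j.succ.castSucc = j.succ.castSucc
      · -- σ fixes the middle, σ ≠ 1, so σ 0 = last; first factor vanishes
        have h0 : σ 0 ≠ 0 := by
          intro h00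
          apply hσ
          have hlast : σ (Fin.last (N+1)) = Fin.last (N+1) := by
            rcases fin_tri (σ (Fin.last (N+1))) with h | h | ⟨j, h⟩
            · exfalso
              have := σ.injective (h.trans h00.symm)
              have := congrArg Fin.val this
              simp [Fin.last] at this
            · exact h
            · exfalso
              have := σ.injective (h.trans (hmid j).symm)
              have := congrArg Fin.val this
              simp [Fin.last] at this
              omega
          apply Equiv.ext
          intro x
          rcases fin_tri x with rfl | rfl | ⟨j, rfl⟩
          · exact h00
          · exact hlast
          · exact hmid j
        have hlast' : σ 0 = Fin.last (N+1) := by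
          rcases fin_tri (σ 0) with h | h | ⟨j, h⟩
          · exact absurd h h0
          · exact h
          · exfalso
            have := σ.injective (h.trans (hmid j).symm)
            have := congrArg Fin.val this
            simp at this
        have : Matrix.of (fun u v =>
            (aMat F c (σ 0) u (c 0).2 *
              ∏ j : Fin N, aMat F c (σ j.succ.castSucc) ((c j.succ.castSucc).1)
                ((c j.succ.castSucc).2)) *
            aMat F c (σ (Fin.last (N+1))) ((c (Fin.last (N+1))).1) v)
            = (0 : Matrix (Fin k) (Fin k) F) := by
          ext u v
          rw [of_apply, hlast', hAl0 u, zero_mul, zero_mul]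
          rfl
        rw [this, smul_zero]
      · push_neg at hmid
        obtain ⟨j0, hj0⟩ := hmid
        have hprod0 : (∏ j : Fin N, aMat F c (σ j.succ.castSucc)
            ((c j.succ.castSucc).1) ((c j.succ.castSucc).2)) = 0 := by
          apply Finset.prod_eq_zero (Finset.mem_univ j0)
          rw [aMat_at_c F c hle hinj, if_neg (fun e => hj0 e.symm)]
        have : Matrix.of (fun u v =>
            (aMat F c (σ 0) u (c 0).2 *
              ∏ j : Fin N, aMat F c (σ j.succ.castSucc) ((c j.succ.castSucc).1)
                ((c j.succ.castSucc).2)) *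
            aMat F c (σ (Fin.last (N+1))) ((c (Fin.last (N+1))).1) v)
            = (0 : Matrix (Fin k) (Fin k) F) := by
          ext u v
          rw [of_apply, hprod0, mul_zero, zero_mul]
          rfl
        rw [this, smul_zero]
    · intro h
      exact absurd (Finset.mem_univ _) h

lemma capelli_one {A : Type} [NonUnitalRing A] (t : Fin 1 → A) (x : Fin 0 → A) :
    capelli 1 t x = t 0 := by
  unfold capelli
  have huniv : (Finset.univ : Finset (Equiv.Perm (Fin 1))) = {1} := by
    ext σ
    simp only [Finset.mem_univ, Finset.mem_singleton, true_iff]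
    apply Equiv.ext
    intro i
    apply Fin.ext
    have h1 := (σ i).isLt
    have h2 := ((1 : Equiv.Perm (Fin 1)) i).isLt
    omega
  rw [huniv, Finset.sum_singleton, Equiv.Perm.sign_one, Units.val_one, one_smul]
  show ncProd (List.ofFn fun i : Fin 1 =>
    if h : (i : ℕ) < 0 then t ((1 : Equiv.Perm (Fin 1)) i) * x ⟨(i:ℕ), h⟩
    else t ((1 : Equiv.Perm (Fin 1)) i)) = t 0
  rw [List.ofFn_succ, List.ofFn_zero]
  rw [dif_neg (by omega)]
  show t ((1 : Equiv.Perm (Fin 1)) 0) = t 0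
  rw [Equiv.Perm.one_apply]

/-- with M = k(k+1)/2, there are symmetric matrices a₁⁺,…,a_M⁺ and
matrices b₁,…,b_{M-1} in M_k(F) with Cap_M(a⁺; b) = e_{1,k}; in particular
(M_k(F), t) does not satisfy the *-Capelli polynomial Cap*_M[Y,X]. -/
theorem stmt_12 (F : Type) [Field F] [CharZero F] (k : ℕ) (hk : 0 < k) :
    (∃ (a : Fin (k * (k + 1) / 2) → Matrix (Fin k) (Fin k) F)
        (b : Fin (k * (k + 1) / 2 - 1) → Matrix (Fin k) (Fin k) F),
      (∀ i, (a i)ᵀ = a i) ∧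
      capelli (k * (k + 1) / 2) a b =
        Matrix.single ⟨0, hk⟩ ⟨k - 1, by omega⟩ (1 : F)) ∧
    ¬ (∀ t : Fin (k * (k + 1) / 2) → Matrix (Fin k) (Fin k) F,
        (∀ i, (t i)ᵀ = t i) →
        ∀ x : Fin (k * (k + 1) / 2 - 1) → Matrix (Fin k) (Fin k) F,
        capelli (k * (k + 1) / 2) t x = 0) := by
  have hmain : ∃ (a : Fin (k * (k + 1) / 2) → Matrix (Fin k) (Fin k) F)
      (b : Fin (k * (k + 1) / 2 - 1) → Matrix (Fin k) (Fin k) F),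
      (∀ i, (a i)ᵀ = a i) ∧
      capelli (k * (k + 1) / 2) a b =
        Matrix.single ⟨0, hk⟩ ⟨k - 1, by omega⟩ (1 : F) := by
    by_cases hk1 : k = 1
    · subst hk1
      refine ⟨fun _ => single ⟨0, hk⟩ ⟨0, hk⟩ (1:F), fun _ => 0, ?_, ?_⟩
      · intro i
        ext u v
        rw [Matrix.transpose_apply, Fin.ext (by omega : (u:ℕ) = (v:ℕ))]
      · exact capelli_one _ _
    · have hk2 : 2 ≤ k := by omega
      have h6 : 6 ≤ k*(k+1) :=
        le_trans (by norm_num) (Nat.mul_le_mul hk2 (show 3 ≤ k+1 by omega))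
      have h3 : 3 ≤ k*(k+1)/2 := by
        have h7 : 6/2 ≤ k*(k+1)/2 := Nat.div_le_div_right h6
        simpa using h7
      obtain ⟨N, hN⟩ : ∃ N, k*(k+1)/2 = N+2 := ⟨k*(k+1)/2 - 2, by omega⟩
      have hk0 : 0 < k := by omega
      have hk1' : k - 1 < k := by omega
      rw [hN]
      exact main2 F k N hk2 hN hk0 hk1'
  refine ⟨hmain, ?_⟩
  intro H
  obtain ⟨a, b, hsym, heq⟩ := hmain
  rw [H a hsym b] at heq
  have h1 := congrFun (congrFun heq ⟨0, hk⟩) ⟨k-1, by omega⟩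
  rw [Matrix.zero_apply, Matrix.single_apply_same] at h1
  exact zero_ne_one h1
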